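/- Let X be a finite set with |X| ≥ 2, and index matrices by the nonempty subsets of X of even cardinality. Define G by G_{AB} = 2^{−|A|+1} if B ⊆ A and G_{AB} = 0 otherwise, and define H by H_{AB} = 2^{|B|−1} · 𝔼_{|A|−|B|} if B ⊆ A and H_{AB} = 0 otherwise. Then G is invertible with inverse H, i.e. G·H = H·G = I. -/

import Mathlib

open Finset

/-- The Euler numbers `𝔼ₖ`, defined by the EGF `1/cosh x = ∑ₖ 𝔼ₖ xᵏ/k!`
(so `𝔼₀ = 1`, `𝔼₂ = −1`, `𝔼₄ = 5`, and `𝔼ₖ = 0` for odd `k`); this recurrence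
is obtained by equating coefficients in `cosh x · (1/cosh x) = 1`. -/
noncomputable def eulerNumber : ℕ → ℚ
  | n =>
    (if n = 0 then 1 else 0) -
      ∑ k : Fin n, if (n - (k : ℕ)) % 2 = 0 then ((n.choose k : ℚ) * eulerNumber k) else 0
  decreasing_by exact k.2

lemma euler_sum (n : ℕ) :
    (∑ k ∈ Finset.range (n+1), if (n-k) % 2 = 0 then (n.choose k : ℚ) * eulerNumber k else 0)
      = if n = 0 then 1 else 0 := by
  rw [Finset.sum_range_succ]
  have h : eulerNumber n = (if n = 0 then 1 else 0) -
      ∑ k ∈ Finset.range n, (if (n-k) % 2 = 0 then (n.choose k : ℚ) * eulerNumber k else 0) := by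
    rw [eulerNumber, ← Fin.sum_univ_eq_sum_range]
  simp [h]

lemma euler_sum_real (n : ℕ) (hn : Even n) :
    (∑ k ∈ Finset.range (n+1), if Even k then (n.choose k : ℝ) * (eulerNumber k : ℝ) else 0)
      = if n = 0 then 1 else 0 := by
  have h := congrArg (Rat.cast (K := ℝ)) (euler_sum n)
  simp only [Rat.cast_sum, apply_ite (Rat.cast (K := ℝ)), Rat.cast_mul, Rat.cast_natCast,
    Rat.cast_one, Rat.cast_zero] at h
  rw [← h]
  refine Finset.sum_congr rfl fun k hk => ?_
  rw [Finset.mem_range, Nat.lt_succ_iff] at hk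
  have hn2 := hn
  rw [Nat.even_iff] at hn2
  have : Even k ↔ (n - k) % 2 = 0 := by rw [Nat.even_iff]; omega
  simp only [this]

lemma euler_sum_real' (n : ℕ) (hn : Even n) :
    (∑ k ∈ Finset.range (n+1), if Even k then (n.choose k : ℝ) * (eulerNumber (n - k) : ℝ) else 0)
      = if n = 0 then 1 else 0 := by
  rw [← Finset.sum_range_reflect, ← euler_sum_real n hn]
  refine Finset.sum_congr rfl fun k hk => ?_
  rw [Finset.mem_range, Nat.lt_succ_iff] at hk
  have hn2 := hn
  rw [Nat.even_iff] at hn2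
  have h1 : n + 1 - 1 - k = n - k := by omega
  have h2 : n - (n - k) = k := by omega
  have h3 : Even (n - k) ↔ Even k := by rw [Nat.even_iff, Nat.even_iff]; omega
  simp only [h1, h2, h3, Nat.choose_symm hk]

lemma sum_subsets {α : Type*} [Fintype α] [DecidableEq α] (A C : Finset α)
    (hC : C.Nonempty) (hCA : C ⊆ A) (g : ℕ → ℝ) :
    (∑ B : {S : Finset α // S.Nonempty ∧ Even S.card},
        if C ⊆ B.1 ∧ B.1 ⊆ A then (if Even B.1.card then g B.1.card else 0) else 0)
      = ∑ j ∈ Finset.range ((A.card - C.card) + 1),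
          ((A.card - C.card).choose j : ℝ) *
            (if Even (C.card + j) then g (C.card + j) else 0) := by
  classical
  have step1 : (∑ B : {S : Finset α // S.Nonempty ∧ Even S.card},
        if C ⊆ B.1 ∧ B.1 ⊆ A then (if Even B.1.card then g B.1.card else 0) else 0)
      = ∑ B ∈ A.powerset.filter (fun B => C ⊆ B),
          (if Even B.card then g B.card else 0) := by
    rw [← Finset.sum_subtype (Finset.univ.filter (fun S : Finset α => S.Nonempty ∧ Even S.card))
      (by simp) (fun B => if C ⊆ B ∧ B ⊆ A then (if Even B.card then g B.card else 0) else 0)]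
    rw [Finset.sum_filter]
    rw [show (A.powerset.filter (fun B => C ⊆ B))
        = Finset.univ.filter (fun B => C ⊆ B ∧ B ⊆ A) by
      ext B; simp [Finset.mem_powerset, and_comm]]
    rw [Finset.sum_filter]
    refine Finset.sum_congr rfl fun B _ => ?_
    by_cases h1 : C ⊆ B ∧ B ⊆ A
    · have hne : B.Nonempty := hC.mono h1.1
      by_cases h2 : Even B.card <;> simp [h1, h2, hne]
    · simp [h1]
  rw [step1]
  have step2 : ∑ B ∈ A.powerset.filter (fun B => C ⊆ B),
          (if Even B.card then g B.card else 0)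
      = ∑ S ∈ (A \ C).powerset,
          (if Even (C.card + S.card) then g (C.card + S.card) else 0) := by
    refine Finset.sum_nbij' (fun B => B \ C) (fun S => S ∪ C) ?_ ?_ ?_ ?_ ?_
    · intro B hB
      rw [Finset.mem_filter, Finset.mem_powerset] at hB
      rw [Finset.mem_powerset]
      exact Finset.sdiff_subset_sdiff hB.1 (Finset.Subset.refl C)
    · intro S hS
      rw [Finset.mem_powerset] at hS
      rw [Finset.mem_filter, Finset.mem_powerset]
      exact ⟨Finset.union_subset (hS.trans (Finset.sdiff_subset)) hCA, Finset.subset_union_right⟩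
    · intro B hB
      rw [Finset.mem_filter] at hB
      exact Finset.sdiff_union_of_subset hB.2
    · intro S hS
      rw [Finset.mem_powerset] at hS
      have hd : Disjoint S C := Finset.disjoint_of_subset_left hS Finset.sdiff_disjoint
      show (S ∪ C) \ C = S
      rw [Finset.union_sdiff_cancel_right hd]
    · intro B hB
      rw [Finset.mem_filter] at hB
      have : C.card + (B \ C).card = B.card := by
        rw [Finset.card_sdiff_of_subset hB.2]
        exact Nat.add_sub_cancel' (Finset.card_le_card hB.2)
      rw [this]
  rw [step2, Finset.powerset_card_disjiUnion]
  erw [Finset.sum_disjiUnion]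
  rw [Finset.card_sdiff_of_subset hCA]
  refine Finset.sum_congr rfl fun j hj => ?_
  have : ∀ S ∈ Finset.powersetCard j (A \ C),
      (if Even (C.card + S.card) then g (C.card + S.card) else 0)
        = (if Even (C.card + j) then g (C.card + j) else 0) := by
    intro S hS
    rw [(Finset.mem_powersetCard.mp hS).2]
  rw [Finset.sum_congr rfl this, Finset.sum_const, Finset.card_powersetCard,
    Finset.card_sdiff_of_subset hCA, nsmul_eq_mul]

/-- Let `X` be a finite set with `|X| ≥ 2` (here the type `α`),
and index real matrices by the nonempty even-cardinality subsets of `X`.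
With `G_{AB} = 2^{−|A|+1}` for `B ⊆ A` (else `0`) and
`H_{AB} = 2^{|B|−1} 𝔼_{|A|−|B|}` for `B ⊆ A` (else `0`),
`G` is invertible with inverse `H`: `G·H = H·G = I`. -/
theorem G_matrix_inverse
    {α : Type*} [Fintype α] [DecidableEq α] (hX : 2 ≤ Fintype.card α)
    (G H : Matrix {A : Finset α // A.Nonempty ∧ Even A.card}
                  {A : Finset α // A.Nonempty ∧ Even A.card} ℝ)
    (hG : ∀ A B, G A B = if B.1 ⊆ A.1 then (2 : ℝ) ^ (-(A.1.card : ℤ) + 1) else 0)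
    (hH : ∀ A B, H A B =
      if B.1 ⊆ A.1 then (2 : ℝ) ^ ((B.1.card : ℤ) - 1) * (eulerNumber (A.1.card - B.1.card) : ℝ)
      else 0) :
    G * H = 1 ∧ H * G = 1 := by
  constructor
  · ext A C
    rw [Matrix.mul_apply, Matrix.one_apply]
    set a := A.1.card with ha
    set c := C.1.card with hc
    have key : ∀ B, G A B * H B C =
        (if C.1 ⊆ B.1 ∧ B.1 ⊆ A.1 then
          (if Even B.1.card then
            (2:ℝ) ^ (-(a:ℤ) + 1) * ((2:ℝ) ^ ((c:ℤ) - 1) * (eulerNumber (B.1.card - c) : ℝ))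
          else 0) else 0) := by
      intro B
      rw [hG, hH]
      by_cases h1 : B.1 ⊆ A.1 <;> by_cases h2 : C.1 ⊆ B.1 <;>
        simp [h1, h2, B.2.2, ha, hc]
    rw [Finset.sum_congr rfl (fun B _ => key B)]
    by_cases hsub : C.1 ⊆ A.1
    · rw [sum_subsets A.1 C.1 C.2.1 hsub
        (fun m => (2:ℝ) ^ (-(a:ℤ) + 1) * ((2:ℝ) ^ ((c:ℤ) - 1) * (eulerNumber (m - c) : ℝ)))]
      set n := a - c with hn
      have hca : c ≤ a := Finset.card_le_card hsub
      have hne : Even n := by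
        have h1 := A.2.2; have h2 := C.2.2
        rw [Nat.even_iff] at h1 h2 ⊢; omega
      have heq : ∀ j ∈ Finset.range (n + 1),
          (n.choose j : ℝ) * (if Even (c + j) then
            (2:ℝ) ^ (-(a:ℤ) + 1) * ((2:ℝ) ^ ((c:ℤ) - 1) * (eulerNumber (c + j - c) : ℝ)) else 0)
          = ((2:ℝ) ^ (-(a:ℤ) + 1) * (2:ℝ) ^ ((c:ℤ) - 1)) *
            (if Even j then (n.choose j : ℝ) * (eulerNumber j : ℝ) else 0) := by
        intro j _
        have h2 : Even (c + j) ↔ Even j := by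
          have := C.2.2; rw [Nat.even_iff] at this; rw [Nat.even_iff, Nat.even_iff]; omega
        rw [Nat.add_sub_cancel_left]
        simp only [h2]
        split_ifs <;> ring
      rw [Finset.sum_congr rfl heq, ← Finset.mul_sum, euler_sum_real n hne]
      by_cases hAC : A = C
      · have hac : a = c := by rw [ha, hc, hAC]
        rw [if_pos hAC, if_pos (show n = 0 by rw [hn, hac, Nat.sub_self]), mul_one,
          ← zpow_add₀ (two_ne_zero), show (-(a:ℤ)+1+((c:ℤ)-1)) = 0 by rw [hac]; ring, zpow_zero]
      · rw [if_neg hAC]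
        have hn0 : n ≠ 0 := by
          intro h
          have : a = c := by omega
          exact hAC (Subtype.ext (Finset.eq_of_subset_of_card_le hsub
            (by rw [← ha, ← hc]; omega)).symm)
        rw [if_neg hn0, mul_zero]
    · have hAC : A ≠ C := fun h => hsub (by rw [h])
      rw [if_neg hAC]
      refine Finset.sum_eq_zero fun B _ => ?_
      rw [if_neg (fun h => hsub (h.1.trans h.2))]
  · ext A C
    rw [Matrix.mul_apply, Matrix.one_apply]
    set a := A.1.card with ha
    set c := C.1.card with hc
    have key : ∀ B, H A B * G B C =
        (if C.1 ⊆ B.1 ∧ B.1 ⊆ A.1 then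
          (if Even B.1.card then
            (2:ℝ) ^ ((B.1.card:ℤ) - 1) * (eulerNumber (a - B.1.card) : ℝ) *
              (2:ℝ) ^ (-(B.1.card:ℤ) + 1)
          else 0) else 0) := by
      intro B
      rw [hG, hH]
      by_cases h1 : B.1 ⊆ A.1 <;> by_cases h2 : C.1 ⊆ B.1 <;>
        simp [h1, h2, B.2.2, ha, hc]
    rw [Finset.sum_congr rfl (fun B _ => key B)]
    by_cases hsub : C.1 ⊆ A.1
    · rw [sum_subsets A.1 C.1 C.2.1 hsub
        (fun m => (2:ℝ) ^ ((m:ℤ) - 1) * (eulerNumber (a - m) : ℝ) * (2:ℝ) ^ (-(m:ℤ) + 1))]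
      set n := a - c with hn
      have hca : c ≤ a := Finset.card_le_card hsub
      have hne : Even n := by
        have h1 := A.2.2; have h2 := C.2.2
        rw [Nat.even_iff] at h1 h2 ⊢; omega
      have heq : ∀ j ∈ Finset.range (n + 1),
          (n.choose j : ℝ) * (if Even (c + j) then
            (2:ℝ) ^ (((c+j:ℕ):ℤ) - 1) * (eulerNumber (a - (c + j)) : ℝ) *
              (2:ℝ) ^ (-((c+j:ℕ):ℤ) + 1) else 0)
          = (if Even j then (n.choose j : ℝ) * (eulerNumber (n - j) : ℝ) else 0) := by
        intro j hj
        rw [Finset.mem_range, Nat.lt_succ_iff] at hj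
        have h2 : Even (c + j) ↔ Even j := by
          have := C.2.2; rw [Nat.even_iff] at this; rw [Nat.even_iff, Nat.even_iff]; omega
        have h3 : a - (c + j) = n - j := by omega
        have h4 : (2:ℝ) ^ (((c+j:ℕ):ℤ) - 1) * (2:ℝ) ^ (-((c+j:ℕ):ℤ) + 1) = 1 := by
          have he : ((c+j:ℕ):ℤ) - 1 + (-((c+j:ℕ):ℤ) + 1) = 0 := by ring
          rw [← zpow_add₀ (two_ne_zero), he, zpow_zero]
        simp only [h2, h3]
        split_ifs with h
        · rw [mul_comm ((2:ℝ) ^ (((c+j:ℕ):ℤ) - 1)) _, mul_assoc, h4, mul_one]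
        · rw [mul_zero]
      rw [Finset.sum_congr rfl heq, euler_sum_real' n hne]
      by_cases hAC : A = C
      · have : a = c := by rw [ha, hc, hAC]
        have hac : a = c := by rw [ha, hc, hAC]
        rw [if_pos hAC, if_pos (show n = 0 by rw [hn, hac, Nat.sub_self])]
      · rw [if_neg hAC]
        have hn0 : n ≠ 0 := by
          intro h
          have : a = c := by omega
          exact hAC (Subtype.ext (Finset.eq_of_subset_of_card_le hsub
            (by rw [← ha, ← hc]; omega)).symm)
        rw [if_neg hn0]
    · have hAC : A ≠ C := fun h => hsub (by rw [h])
      rw [if_neg hAC]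
      refine Finset.sum_eq_zero fun B _ => ?_
      rw [if_neg (fun h => hsub (h.1.trans h.2))]
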